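/- Let N ≥ 1, let E ⊆ Fin N × Fin N be a finite set of ordered pairs representing an orientation of the edges of a finite simple graph G on vertices {1,…,N} (each edge of G appears in E exactly once, in one orientation, and (i,j) ∈ E implies i ≠ j). Given desired displacements d : E → ℝ², a target b ∈ ℝ², and weights a, c > 0, define the cost Φ : (ℝ²)^N → ℝ by Φ(r) = (a/2)·Σ_{(i,j)∈E} ‖r_i − r_j − d(i,j)‖² + (c/2)·Σ_{i=1}^N ‖r_i − b‖², where ‖·‖ is the Euclidean norm. Then the unique global minimizer r̄ of Φ satisfies (1/N)·Σ_{i=1}^N r̄_i = b, i.e., the centroid of the optimal configuration is exactly the target location. -/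

import Mathlib

open Finset

/-- The centroid of the unique global minimizer of the formation-plus-target
cost is exactly the target location `b`. -/
theorem formation_cost_minimizer_centroid
    (N : ℕ) (hN : 1 ≤ N) (G : SimpleGraph (Fin N)) [DecidableRel G.Adj]
    (E : Finset (Fin N × Fin N))
    (hEadj : ∀ i j : Fin N, G.Adj i j ↔ ((i, j) ∈ E ∨ (j, i) ∈ E))
    (hEonce : ∀ i j : Fin N, (i, j) ∈ E → (j, i) ∉ E)
    (hEne : ∀ i j : Fin N, (i, j) ∈ E → i ≠ j)
    (d : Fin N × Fin N → EuclideanSpace ℝ (Fin 2))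
    (b : EuclideanSpace ℝ (Fin 2)) (a c : ℝ) (ha : 0 < a) (hc : 0 < c)
    (Φ : PiLp 2 (fun _ : Fin N => EuclideanSpace ℝ (Fin 2)) → ℝ)
    (hΦ : ∀ r, Φ r = (a / 2) * ∑ e ∈ E, ‖r e.1 - r e.2 - d e‖^2
      + (c / 2) * ∑ i : Fin N, ‖r i - b‖^2)
    (rbar : PiLp 2 (fun _ : Fin N => EuclideanSpace ℝ (Fin 2)))
    (hmin : ∀ r, Φ rbar ≤ Φ r) :
    ((N : ℝ))⁻¹ • (∑ i : Fin N, rbar i) = b := by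
  have hNpos : (0 : ℝ) < N := by exact_mod_cast hN
  set x : Fin N → EuclideanSpace ℝ (Fin 2) := fun i => rbar i - b with hx
  set S : EuclideanSpace ℝ (Fin 2) := ∑ i, x i with hS
  set v : EuclideanSpace ℝ (Fin 2) := -((N : ℝ)⁻¹ • S) with hv
  -- perturbed configuration
  have key := hmin (WithLp.toLp 2 (fun i => rbar i + v))
  rw [hΦ, hΦ] at key
  have hform : ∀ e : Fin N × Fin N,
      ((fun i => rbar i + v) e.1 - (fun i => rbar i + v) e.2 - d e)
        = rbar e.1 - rbar e.2 - d e := by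
    intro e; simp only; abel
  simp only [WithLp.ofLp_toLp, hform, add_sub_add_right_eq_sub] at key
  have hsum : (∑ i : Fin N, ‖rbar i - b‖^2) ≤ ∑ i : Fin N, ‖rbar i + v - b‖^2 := by
    nlinarith [key]
  have hexp : ∀ i : Fin N, ‖rbar i + v - b‖^2
      = ‖x i‖^2 + 2 * inner ℝ (x i) v + ‖v‖^2 := by
    intro i
    have : rbar i + v - b = x i + v := by rw [hx]; exact add_sub_right_comm _ _ _
    rw [this, @norm_add_sq_real]
  have hsum2 : (∑ i : Fin N, ‖rbar i + v - b‖^2)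
      = (∑ i : Fin N, ‖x i‖^2) + 2 * inner ℝ S v + (N : ℝ) * ‖v‖^2 := by
    simp only [hexp]
    rw [Finset.sum_add_distrib, Finset.sum_add_distrib, Finset.sum_const,
      Finset.card_univ, Fintype.card_fin, ← Finset.mul_sum, ← sum_inner]
    push_cast
    ring
  have hinner : (inner ℝ S v : ℝ) = -((N : ℝ)⁻¹ * ‖S‖^2) := by
    rw [hv, inner_neg_right, real_inner_smul_right, real_inner_self_eq_norm_sq]
  have hnv : ‖v‖^2 = (N : ℝ)⁻¹^2 * ‖S‖^2 := by
    rw [hv, norm_neg, norm_smul]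
    simp [mul_pow, abs_of_pos (inv_pos.mpr hNpos)]
  have hSx : (∑ i : Fin N, ‖rbar i - b‖^2) = ∑ i : Fin N, ‖x i‖^2 := by
    simp [hx]
  rw [hsum2, hinner, hnv, hSx] at hsum
  have hNinv : (0 : ℝ) < (N : ℝ)⁻¹ := inv_pos.mpr hNpos
  have hS2 : ‖S‖^2 ≤ 0 := by
    have h : (N : ℝ) * (N : ℝ)⁻¹ = 1 := mul_inv_cancel₀ (ne_of_gt hNpos)
    have h2 : (N : ℝ) * (N : ℝ)⁻¹^2 = (N : ℝ)⁻¹ := by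
      field_simp
    nlinarith [hsum, sq_nonneg ‖S‖, hNinv]
  have hS0 : S = 0 := by
    have := norm_eq_zero.mp (le_antisymm (by nlinarith [norm_nonneg S]) (norm_nonneg S))
    exact this
  have hsumr : (∑ i : Fin N, rbar i) = (N : ℝ) • b := by
    have : (∑ i : Fin N, rbar i) = S + ∑ i : Fin N, b := by
      rw [hS]
      simp only [hx]
      rw [← Finset.sum_add_distrib]
      exact Finset.sum_congr rfl fun i _ => (sub_add_cancel (rbar i) b).symm
    rw [this, hS0, zero_add, Finset.sum_const, Finset.card_univ, Fintype.card_fin,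
      ← Nat.cast_smul_eq_nsmul ℝ]
  rw [hsumr, smul_smul, inv_mul_cancel₀ (ne_of_gt hNpos), one_smul]
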